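/- The additive quotient group O'/O, where O = ℤ + f·O_K and O' = ℤ + f'·O_K are orders in an imaginary quadratic field K with f' ∣ f, is a cyclic group of order f/f'. -/

import Mathlib

lemma int_of_isIntegral (q : ℚ) (h : IsIntegral ℤ ((q:ℂ))) : ∃ n : ℤ, (q:ℚ) = n := by
  have h2 : IsIntegral ℤ q := by
    rwa [show ((q:ℂ)) = algebraMap ℚ ℂ q from rfl,
      isIntegral_algebraMap_iff (algebraMap ℚ ℂ).injective] at h
  obtain ⟨n, hn⟩ := IsIntegrallyClosed.isIntegral_iff.mp h2
  exact ⟨n, hn.symm⟩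

lemma sqf_den (m : ℕ) (hm : Squarefree m) (q : ℚ) (t : ℤ) (h : (m:ℚ) * q^2 = t) :
    ∃ v : ℤ, (q:ℚ) = v := by
  have hden : ((q.den : ℚ)) ≠ 0 := by exact_mod_cast q.den_nz
  have h2 : (m:ℚ) * q.num^2 = t * q.den^2 := by
    have hq := Rat.num_div_den q
    rw [← hq] at h
    field_simp at h
    linarith [h]
  have h3 : (m:ℤ) * q.num^2 = t * (q.den:ℤ)^2 := by exact_mod_cast h2
  have hdvd : ((q.den:ℤ))^2 ∣ (m:ℤ) * q.num^2 := ⟨t, by linarith [h3]⟩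
  have hdvd2 : q.den^2 ∣ m * q.num.natAbs^2 := by
    have := Int.natAbs_dvd_natAbs.mpr hdvd
    simpa [Int.natAbs_mul, Int.natAbs_pow] using this
  have hcop : (q.den^2).Coprime (q.num.natAbs^2) := (q.reduced.symm.pow _ _)
  have hdvd3 : q.den^2 ∣ m := (Nat.Coprime.dvd_of_dvd_mul_right hcop hdvd2)
  have : IsUnit q.den := hm q.den (by rw [← pow_two]; exact hdvd3)
  have hd1 : q.den = 1 := Nat.isUnit_iff.mp this
  exact ⟨q.num, by rw [← Rat.num_div_den q, hd1]; simp⟩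




open Polynomial in
lemma theta_integral (m : ℕ) : IsIntegral ℤ (Complex.I * (Real.sqrt m : ℝ)) := by
  refine ⟨X^2 + C (m:ℤ), monic_X_pow_add (by simpa using (degree_C_le (a := (m:ℤ))).trans_lt (by norm_num)), ?_⟩
  have h2 : ((Real.sqrt m : ℝ):ℂ)^2 = (m:ℂ) := by
    rw [← Complex.ofReal_pow, Real.sq_sqrt (by positivity)]
    push_cast; ring
  simp only [eval₂_add, eval₂_pow, eval₂_X, eval₂_C]
  rw [mul_pow, h2]
  simp [Complex.I_sq]

open Polynomial in
lemma omega_integral (m k : ℕ) (hk : m + 1 = 4 * k) :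
    IsIntegral ℤ ((1 + Complex.I * (Real.sqrt m : ℝ)) / 2) := by
  refine ⟨X^2 - X + C (k:ℤ), ?_, ?_⟩
  · have : (X^2 - X + C (k:ℤ)) = X^2 + (-X + C (k:ℤ)) := by ring
    rw [this]
    refine monic_X_pow_add ?_
    refine lt_of_le_of_lt (Polynomial.degree_add_le _ _) ?_
    simp only [max_lt_iff]
    constructor
    · simpa using (Polynomial.degree_X_le (R := ℤ)).trans_lt (by norm_num)
    · exact degree_C_le.trans_lt (by norm_num)
  · have h2 : ((Real.sqrt m : ℝ):ℂ)^2 = (m:ℂ) := by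
      rw [← Complex.ofReal_pow, Real.sq_sqrt (by positivity)]
      push_cast; ring
    simp only [eval₂_add, eval₂_sub, eval₂_pow, eval₂_X, eval₂_C, eval₂_natCast, eq_intCast, Int.cast_natCast]
    have hm : (m : ℂ) + 1 = 4 * k := by exact_mod_cast congrArg (Nat.cast : ℕ → ℂ) hk
    have hI : Complex.I^2 = -1 := Complex.I_sq
    linear_combination ((((Real.sqrt m : ℝ):ℂ))^2/4) * hI - (1/4) * h2 - (1/4) * hm

-- step: extract integers u v N from an integral element
lemma extract (m : ℕ) (hm : Squarefree m) (hmpos : 0 < m) (a b : ℚ) (z : ℂ)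
    (hz : z = (a:ℂ) + (b:ℂ) * Complex.I * (Real.sqrt m : ℝ))
    (hint : IsIntegral ℤ z) :
    ∃ u v N : ℤ, (2*a : ℚ) = u ∧ (2*b : ℚ) = v ∧ u^2 + (m:ℤ)*v^2 = 4*N := by
  set θ : ℂ := Complex.I * (Real.sqrt m : ℝ) with hθdef
  have hθ2 : θ^2 = -(m:ℂ) := by
    have h2 : ((Real.sqrt m : ℝ):ℂ)^2 = (m:ℂ) := by
      rw [← Complex.ofReal_pow, Real.sq_sqrt (by positivity)]
      push_cast; ring
    rw [hθdef, mul_pow, h2]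
    simp [Complex.I_sq]
  have hcz : (starRingEnd ℂ) z = (a:ℂ) - (b:ℂ) * θ := by
    rw [hz]
    simp [map_add, map_mul, map_ratCast, Complex.conj_I, Complex.conj_ofReal]
    ring
  have hcint : IsIntegral ℤ ((starRingEnd ℂ) z) :=
    hint.map ((starRingEnd ℂ).toIntAlgHom)
  have hu_int : IsIntegral ℤ (((2*a : ℚ)):ℂ) := by
    have h := hint.add hcint
    have he : ((2*a:ℚ):ℂ) = z + (starRingEnd ℂ) z := by
      rw [hcz, hz]; push_cast; ring
    rwa [he]
  have hN_int : IsIntegral ℤ (((a^2 + m*b^2 : ℚ)):ℂ) := by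
    have h := hint.mul hcint
    have he : ((a^2 + m*b^2:ℚ):ℂ) = z * (starRingEnd ℂ) z := by
      rw [hcz, hz]; push_cast
      linear_combination ((b:ℂ))^2 * hθ2
    rwa [he]
  obtain ⟨u, hu⟩ := int_of_isIntegral _ hu_int
  obtain ⟨N, hN⟩ := int_of_isIntegral _ hN_int
  have hmb : (m:ℚ) * (2*b)^2 = ((4*N - u^2 : ℤ):ℚ) := by
    push_cast
    linear_combination 4*hN - (2*a + (u:ℚ))*hu
  obtain ⟨v, hv⟩ := sqf_den m hm (2*b) (4*N - u^2) hmb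
  refine ⟨u, v, N, hu, hv, ?_⟩
  have : (u:ℚ)^2 + (m:ℚ)*(v:ℚ)^2 = 4*N := by
    linear_combination (-(2*a + (u:ℚ)))*hu - (m:ℚ)*(2*b + (v:ℚ))*hv + 4*hN
  exact_mod_cast this

lemma decomp (m : ℕ) (hm : Squarefree m) (hmpos : 0 < m) :
    ∃ ω : ℂ, (∃ a b : ℚ, ω = (a:ℂ) + (b:ℂ) * Complex.I * (Real.sqrt m : ℝ)) ∧
      IsIntegral ℤ ω ∧ ω.im ≠ 0 ∧
      ∀ z : ℂ, (∃ a b : ℚ, z = (a:ℂ) + (b:ℂ) * Complex.I * (Real.sqrt m : ℝ)) →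
        IsIntegral ℤ z → ∃ a b : ℤ, z = (a:ℂ) + (b:ℂ) * ω := by
  have hs : (0:ℝ) < Real.sqrt m := Real.sqrt_pos.mpr (by exact_mod_cast hmpos)
  set θ : ℂ := Complex.I * (Real.sqrt m : ℝ) with hθdef
  have hθim : θ.im = Real.sqrt m := by simp [hθdef]
  have h4 : ¬ ((4:ℕ) ∣ m) := by
    intro h
    exact (by norm_num : ¬ IsUnit (2:ℕ)) (hm 2 (by omega))
  by_cases hm4 : m % 4 = 3
  · -- ω = (1+θ)/2
    refine ⟨(1+θ)/2, ⟨1/2, 1/2, by push_cast; ring⟩, ?_, ?_, ?_⟩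
    · exact omega_integral m ((m+1)/4) (by omega)
    · have : ((1+θ)/2).im = Real.sqrt m / 2 := by
        simp [Complex.div_im, Complex.add_im, hθim]
      rw [this]; positivity
    · rintro z ⟨a, b, hz⟩ hint
      obtain ⟨u, v, N, hu, hv, hEq⟩ := extract m hm hmpos a b z hz hint
      -- rule out opposite parities
      have hpar : u % 2 = v % 2 := by
        rcases Int.even_or_odd u with ⟨u1, hu1⟩ | ⟨u1, hu1⟩ <;>
          rcases Int.even_or_odd v with ⟨v1, hv1⟩ | ⟨v1, hv1⟩
        · omega
        · exfalso
          obtain ⟨c, hc⟩ : ∃ c : ℤ, (m:ℤ) + 4*c = 4*N :=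
            ⟨u1*u1 + m*(v1^2+v1), by subst hu1 hv1; linear_combination hEq⟩
          omega
        · exfalso
          obtain ⟨c, hc⟩ : ∃ c : ℤ, 1 + 4*c = 4*N :=
            ⟨u1^2+u1 + m*(v1*v1), by subst hu1 hv1; linear_combination hEq⟩
          omega
        · omega
      obtain ⟨t, ht⟩ : ∃ t : ℤ, u - v = 2*t := ⟨(u-v)/2, by omega⟩
      refine ⟨t, v, ?_⟩
      have huC : 2*(a:ℂ) = (u:ℂ) := by exact_mod_cast congrArg (Rat.cast (K := ℂ)) hu
      have hvC : 2*(b:ℂ) = (v:ℂ) := by exact_mod_cast congrArg (Rat.cast (K := ℂ)) hv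
      have htC : (u:ℂ) - (v:ℂ) = 2*(t:ℂ) := by exact_mod_cast congrArg (fun x : ℤ => (x:ℂ)) ht
      rw [hz]
      linear_combination (1/2)*huC + (θ/2)*hvC + (1/2)*htC
  · -- ω = θ
    refine ⟨θ, ⟨0, 1, by push_cast; ring⟩, theta_integral m, by rw [hθim]; positivity, ?_⟩
    rintro z ⟨a, b, hz⟩ hint
    obtain ⟨u, v, N, hu, hv, hEq⟩ := extract m hm hmpos a b z hz hint
    have heven : u % 2 = 0 ∧ v % 2 = 0 := by
      rcases Int.even_or_odd u with ⟨u1, hu1⟩ | ⟨u1, hu1⟩ <;>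
        rcases Int.even_or_odd v with ⟨v1, hv1⟩ | ⟨v1, hv1⟩
      · omega
      · exfalso
        obtain ⟨c, hc⟩ : ∃ c : ℤ, (m:ℤ) + 4*c = 4*N :=
          ⟨u1*u1 + m*(v1^2+v1), by subst hu1 hv1; linear_combination hEq⟩
        omega
      · exfalso
        obtain ⟨c, hc⟩ : ∃ c : ℤ, 1 + 4*c = 4*N :=
          ⟨u1^2+u1 + m*(v1*v1), by subst hu1 hv1; linear_combination hEq⟩
        omega
      · exfalso
        obtain ⟨c, hc⟩ : ∃ c : ℤ, 1 + (m:ℤ) + 4*c = 4*N :=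
          ⟨u1^2+u1 + m*(v1^2+v1), by subst hu1 hv1; linear_combination hEq⟩
        omega
    obtain ⟨t, ht⟩ : ∃ t : ℤ, u = 2*t := ⟨u/2, by omega⟩
    obtain ⟨s, hs'⟩ : ∃ s : ℤ, v = 2*s := ⟨v/2, by omega⟩
    refine ⟨t, s, ?_⟩
    have huC : 2*(a:ℂ) = (u:ℂ) := by exact_mod_cast congrArg (Rat.cast (K := ℂ)) hu
    have hvC : 2*(b:ℂ) = (v:ℂ) := by exact_mod_cast congrArg (Rat.cast (K := ℂ)) hv
    have htC : (u:ℂ) = 2*(t:ℂ) := by exact_mod_cast congrArg (fun x : ℤ => (x:ℂ)) ht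
    have hsC : (v:ℂ) = 2*(s:ℂ) := by exact_mod_cast congrArg (fun x : ℤ => (x:ℂ)) hs'
    rw [hz]
    linear_combination (1/2)*huC + (θ/2)*hvC + (1/2)*htC + (θ/2)*hsC



/-- The additive quotient `O'/O`, where `O = ℤ + f·O_K` and `O' = ℤ + f'·O_K` are the
orders of conductors `f` and `f'` (with `f' ∣ f`) in an imaginary quadratic field
`K ⊆ ℂ`, is a cyclic group of order `f/f'`. -/
theorem stmt6 (K : Subfield ℂ) (m : ℕ) (hm : Squarefree m) (hmpos : 0 < m)
    (hK : (K : Set ℂ) =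
      {z : ℂ | ∃ a b : ℚ, z = (a : ℂ) + (b : ℂ) * Complex.I * (Real.sqrt m : ℝ)})
    (OK : Subring ℂ) (hOK : ∀ z : ℂ, z ∈ OK ↔ z ∈ K ∧ IsIntegral ℤ z)
    (f f' : ℕ) (hf' : 0 < f') (hdvd : f' ∣ f)
    (O O' : AddSubgroup ℂ)
    (hO : (O : Set ℂ) = {z : ℂ | ∃ (a : ℤ) (w : ℂ), w ∈ OK ∧ z = (a : ℂ) + (f : ℂ) * w})
    (hO' : (O' : Set ℂ) =
      {z : ℂ | ∃ (a : ℤ) (w : ℂ), w ∈ OK ∧ z = (a : ℂ) + (f' : ℂ) * w}) :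
    IsAddCyclic (O' ⧸ O.addSubgroupOf O') ∧
      Nat.card (O' ⧸ O.addSubgroupOf O') = f / f' := by
  obtain ⟨ω, hωK, hωint, hωim, hdec⟩ := decomp m hm hmpos
  have hKm : ∀ z : ℂ, z ∈ K ↔ ∃ a b : ℚ, z = (a:ℂ) + (b:ℂ) * Complex.I * (Real.sqrt m : ℝ) :=
    fun z => by rw [← SetLike.mem_coe, hK]; rfl
  have hωOK : ω ∈ OK := (hOK ω).mpr ⟨(hKm ω).mpr hωK, hωint⟩
  have hOKdec : ∀ z ∈ OK, ∃ a b : ℤ, z = (a:ℂ) + (b:ℂ) * ω := fun z hz =>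
    hdec z ((hKm z).mp ((hOK z).mp hz).1) ((hOK z).mp hz).2
  -- membership characterizations
  have memIff : ∀ (S : AddSubgroup ℂ) (n : ℕ),
      ((S : Set ℂ) = {z : ℂ | ∃ (a : ℤ) (w : ℂ), w ∈ OK ∧ z = (a : ℂ) + (n : ℂ) * w}) →
      ∀ z : ℂ, z ∈ S ↔ ∃ x c : ℤ, z = (x:ℂ) + (n:ℂ) * (c:ℂ) * ω := by
    intro S n hS z
    constructor
    · intro hz
      rw [← SetLike.mem_coe, hS] at hz
      obtain ⟨a, w, hw, hzw⟩ := hz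
      obtain ⟨b, c, hbc⟩ := hOKdec w hw
      exact ⟨a + n*b, c, by rw [hzw, hbc]; push_cast; ring⟩
    · rintro ⟨x, c, h⟩
      rw [← SetLike.mem_coe, hS]
      exact ⟨x, (c:ℂ) * ω, mul_mem (intCast_mem OK c) hωOK, by rw [h]; ring⟩
  have hO'mem := memIff O' f' hO'
  have hOmem := memIff O f hO
  set g := f / f' with hg
  have hfg : f = f' * g := (Nat.mul_div_cancel' hdvd).symm
  set g₀ : O' := ⟨(f':ℂ) * ω, (hO'mem _).mpr ⟨0, 1, by push_cast; ring⟩⟩ with hg₀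
  set q₀ : O' ⧸ O.addSubgroupOf O' := QuotientAddGroup.mk g₀ with hq₀
  have hgen : ∀ x : O' ⧸ O.addSubgroupOf O', ∃ n : ℤ, n • q₀ = x := by
    intro x
    induction x using QuotientAddGroup.induction_on with
    | H z =>
      obtain ⟨z, hzO'⟩ := z
      obtain ⟨x0, c, hzeq⟩ := (hO'mem z).mp hzO'
      refine ⟨c, ?_⟩
      have : c • q₀ = QuotientAddGroup.mk (c • g₀) := rfl
      rw [this, QuotientAddGroup.eq]
      rw [AddSubgroup.mem_addSubgroupOf]
      refine (hOmem _).mpr ⟨x0, 0, ?_⟩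
      show -((c • g₀ : O') : ℂ) + z = _
      rw [hg₀]
      push_cast [hzeq, zsmul_eq_mul]
      ring
  have hord : ∀ n : ℕ, n • q₀ = 0 ↔ g ∣ n := by
    intro n
    have hms : n • q₀ = QuotientAddGroup.mk (n • g₀) := rfl
    rw [hms, QuotientAddGroup.eq_zero_iff, AddSubgroup.mem_addSubgroupOf]
    have hval : ((n • g₀ : O') : ℂ) = (n:ℂ) * ((f':ℂ) * ω) := by
      push_cast [hg₀, nsmul_eq_mul]; ring
    rw [hval, hOmem]
    constructor
    · rintro ⟨x, c, heq⟩
      have him := congrArg Complex.im heq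
      simp only [Complex.add_im, Complex.mul_im, Complex.mul_re, Complex.natCast_re,
        Complex.natCast_im, Complex.intCast_re, Complex.intCast_im, mul_zero, zero_mul,
        add_zero, zero_add, sub_zero, mul_comm] at him
      have him2 : ((n * f' : ℤ):ℝ) * ω.im = ((f * c : ℤ):ℝ) * ω.im := by
        push_cast
        push_cast at him
        linarith [him]
      have hint : (n : ℤ) * f' = (f:ℤ) * c := by
        have := mul_right_cancel₀ hωim him2
        exact_mod_cast this
      have hnc : (n : ℤ) = g * c := by
        have hf'pos : (0:ℤ) < f' := by exact_mod_cast hf'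
        have : (n : ℤ) * f' = (g * c) * f' := by rw [hint, hfg]; push_cast; ring
        exact mul_right_cancel₀ (by positivity) this
      have : (g:ℤ) ∣ (n:ℤ) := ⟨c, hnc⟩
      exact_mod_cast this
    · rintro ⟨k, hk⟩
      refine ⟨0, k, ?_⟩
      rw [hk, hfg]
      push_cast
      ring
  have hq0 : addOrderOf q₀ = g :=
    Nat.dvd_antisymm (addOrderOf_dvd_of_nsmul_eq_zero ((hord g).mpr dvd_rfl))
      ((hord _).mp (addOrderOf_nsmul_eq_zero q₀))
  have htop : AddSubgroup.zmultiples q₀ = ⊤ :=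
    eq_top_iff.mpr fun x _ => (AddSubgroup.mem_zmultiples_iff).mpr (hgen x)
  constructor
  · exact ⟨⟨q₀, fun x => (AddSubgroup.mem_zmultiples_iff).mpr (hgen x)⟩⟩
  · calc Nat.card (O' ⧸ O.addSubgroupOf O')
        = Nat.card (⊤ : AddSubgroup (O' ⧸ O.addSubgroupOf O')) :=
          (Nat.card_congr AddSubgroup.topEquiv.toEquiv).symm
      _ = Nat.card (AddSubgroup.zmultiples q₀) := by rw [htop]
      _ = addOrderOf q₀ := Nat.card_zmultiples q₀
      _ = f / f' := hq0
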